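/- Let (L, (A_b)_{0≤b<B}, C) be a linear representation with Q = A_0 + ... + A_{B−1}, and let Σ_K(x) = Σ_{|w|=K, .w ≤ x} A_w C. Then for every x in [0,1) with B-ary expansion x = 0.x_1 x_2 x_3..., the recursion Σ_{K+1}(x) = Σ_{b < x_1} A_b Q^K C + A_{x_1} Σ_K(Bx − x_1) holds. -/

import Mathlib

open Matrix

lemma prodSum (B d : ℕ) (A : ℕ → Matrix (Fin d) (Fin d) ℂ) :
    ∀ K : ℕ, ∑ t : Fin K → Fin B, (List.ofFn fun i => A (t i)).prod
      = (∑ b ∈ Finset.range B, A b) ^ K := by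
  intro K
  induction K with
  | zero => simp
  | succ K ih =>
    rw [← (Fin.consEquiv (fun _ => Fin B)).sum_comp]
    have : ∀ p : (fun _ : Fin (K+1) => Fin B) 0 × (∀ _ : Fin K, Fin B),
        (List.ofFn fun i => A ((Fin.consEquiv (fun _ => Fin B)) p i)).prod
          = A p.1 * (List.ofFn fun i => A (p.2 i)).prod := by
      intro p
      simp [Fin.consEquiv, List.ofFn_succ]
    rw [Fintype.sum_congr _ _ this, Fintype.sum_prod_type]
    simp_rw [← Finset.mul_sum, ih, ← Finset.sum_mul, pow_succ']
    rw [Fin.sum_univ_eq_sum_range (fun b => A b)]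

lemma sumMulVec {ι : Type*} (d : ℕ) (s : Finset ι) (M : ι → Matrix (Fin d) (Fin d) ℂ)
    (v : Fin d → ℂ) : ∑ i ∈ s, M i *ᵥ v = (∑ i ∈ s, M i) *ᵥ v := by
  induction s using Finset.cons_induction with
  | empty => simp [Matrix.zero_mulVec]
  | cons a s ha ih => simp [Finset.sum_cons, Matrix.add_mulVec, ih]

theorem sigma_recursion
    (B d : ℕ) (hB : 2 ≤ B)
    (A : ℕ → Matrix (Fin d) (Fin d) ℂ) (C : Fin d → ℂ)
    (Q : Matrix (Fin d) (Fin d) ℂ) (hQ : Q = ∑ b ∈ Finset.range B, A b)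
    (Sig : ℕ → ℝ → (Fin d → ℂ))
    (hSig : ∀ K x, Sig K x =
      ∑ w ∈ Finset.univ.filter
          (fun w : Fin K → Fin B =>
            (∑ i : Fin K, ((w i : ℕ) : ℝ) / (B : ℝ) ^ ((i : ℕ) + 1)) ≤ x),
        ((List.ofFn fun i => A (w i)).prod) *ᵥ C)
    (x : ℝ) (hx : x ∈ Set.Ico (0 : ℝ) 1)
    (x₁ : ℕ) (hx₁ : (x₁ : ℤ) = ⌊(B : ℝ) * x⌋)
    (K : ℕ) :
    Sig (K + 1) x =
      (∑ b ∈ Finset.range x₁, (A b * Q ^ K) *ᵥ C)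
        + A x₁ *ᵥ Sig K ((B : ℝ) * x - x₁) := by
  obtain ⟨hx0, hxlt1⟩ := hx
  have hBR : (0:ℝ) < B := by
    have h : 0 < B := lt_of_lt_of_le (by norm_num) hB
    exact_mod_cast h
  have hfl : (x₁ : ℝ) ≤ (B:ℝ) * x := by
    have h := Int.floor_le ((B:ℝ) * x)
    rw [← hx₁] at h; exact_mod_cast h
  have hfl2 : (B:ℝ) * x < (x₁ : ℝ) + 1 := by
    have h := Int.lt_floor_add_one ((B:ℝ) * x)
    rw [← hx₁] at h; exact_mod_cast h
  have hx₁B : x₁ < B := by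
    have h : (x₁:ℝ) < B := lt_of_le_of_lt hfl (by nlinarith)
    exact_mod_cast h
  have geo : ∀ n : ℕ, ∑ i ∈ Finset.range n, ((B:ℝ)-1)/(B:ℝ)^(i+1) = 1 - (1/(B:ℝ))^n := by
    intro n
    induction n with
    | zero => simp
    | succ n ih =>
      rw [Finset.sum_range_succ, ih]
      have hBne : (B:ℝ) ≠ 0 := ne_of_gt hBR
      rw [_root_.one_div_pow, _root_.one_div_pow]
      field_simp
      ring
  have Snn : ∀ t : Fin K → Fin B, 0 ≤ ∑ i : Fin K, ((t i : ℕ):ℝ)/(B:ℝ)^((i:ℕ)+1) := by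
    intro t; positivity
  have Slt : ∀ t : Fin K → Fin B, (∑ i : Fin K, ((t i : ℕ):ℝ)/(B:ℝ)^((i:ℕ)+1)) < 1 := by
    intro t
    have h1 : (∑ i : Fin K, ((t i:ℕ):ℝ)/(B:ℝ)^((i:ℕ)+1))
        ≤ ∑ i ∈ Finset.range K, ((B:ℝ)-1)/(B:ℝ)^(i+1) := by
      rw [← Fin.sum_univ_eq_sum_range (fun i => ((B:ℝ)-1)/(B:ℝ)^(i+1))]
      apply Finset.sum_le_sum
      intro i _
      gcongr
      have h2 : (t i : ℕ) + 1 ≤ B := (t i).2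
      have h3 : ((t i:ℕ):ℝ) + 1 ≤ (B:ℝ) := by exact_mod_cast h2
      linarith
    have h2 : (0:ℝ) < (1/(B:ℝ))^K := by positivity
    calc _ ≤ 1 - (1/(B:ℝ))^K := h1.trans_eq (geo K)
      _ < 1 := by linarith
  rw [hSig, Finset.sum_filter, ← (Fin.consEquiv (fun _ => Fin B)).sum_comp,
    Fintype.sum_prod_type]
  have step : ∀ (b : Fin B) (t : (i : Fin K) → (fun _ : Fin (K+1) => Fin B) (Fin.succ i)),
      (if (∑ i : Fin (K+1), (((Fin.consEquiv (fun _ => Fin B)) (b, t) i : ℕ):ℝ)/(B:ℝ)^((i:ℕ)+1)) ≤ x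
        then (List.ofFn fun i => A ((Fin.consEquiv (fun _ => Fin B)) (b, t) i)).prod *ᵥ C else 0)
      = if ((b:ℕ):ℝ)/B + (∑ i : Fin K, ((t i:ℕ):ℝ)/(B:ℝ)^((i:ℕ)+1))/B ≤ x
        then A (b:ℕ) *ᵥ ((List.ofFn fun i => A ((t i : Fin B) : ℕ)).prod *ᵥ C) else 0 := by
    intro b t
    have hs : (∑ i : Fin (K+1), (((Fin.consEquiv (fun _ => Fin B)) (b, t) i : ℕ):ℝ)/(B:ℝ)^((i:ℕ)+1))
        = ((b:ℕ):ℝ)/B + (∑ i : Fin K, ((t i:ℕ):ℝ)/(B:ℝ)^((i:ℕ)+1))/B := by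
      rw [Fin.sum_univ_succ]
      congr 1
      · simp [Fin.consEquiv]
      · rw [Finset.sum_div]
        apply Finset.sum_congr rfl
        intro i _
        simp only [Fin.consEquiv_apply, Fin.cons_succ, Fin.val_succ]
        rw [div_div]
        ring_nf
    have hp : (List.ofFn fun i => A ((Fin.consEquiv (fun _ => Fin B)) (b, t) i)).prod
        = A (b:ℕ) * (List.ofFn fun i => A ((t i : Fin B) : ℕ)).prod := by
      simp [Fin.consEquiv, List.ofFn_succ]
    rw [hs, hp, ← Matrix.mulVec_mulVec]
  rw [Finset.sum_congr rfl (fun b _ => Finset.sum_congr rfl (fun t _ => step b t))]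
  have inner : ∀ b : Fin B,
      (∑ t : Fin K → Fin B, if ((b:ℕ):ℝ)/B + (∑ i : Fin K, ((t i:ℕ):ℝ)/(B:ℝ)^((i:ℕ)+1))/B ≤ x
          then A (b:ℕ) *ᵥ ((List.ofFn fun i => A ((t i : Fin B) : ℕ)).prod *ᵥ C) else 0)
      = if (b:ℕ) < x₁ then (A (b:ℕ) * Q^K) *ᵥ C
        else if (b:ℕ) = x₁ then A x₁ *ᵥ Sig K ((B:ℝ)*x - x₁) else 0 := by
    intro b
    rcases lt_trichotomy ((b:ℕ)) x₁ with hlt | heq | hgt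
    · rw [if_pos hlt]
      have hcond : ∀ t : Fin K → Fin B,
          ((b:ℕ):ℝ)/B + (∑ i : Fin K, ((t i:ℕ):ℝ)/(B:ℝ)^((i:ℕ)+1))/B ≤ x := by
        intro t
        have hb1 : ((b:ℕ):ℝ) + 1 ≤ (x₁:ℝ) := by exact_mod_cast hlt
        have h1 := Slt t
        have h2 := Snn t
        rw [← add_div, div_le_iff₀ hBR]
        nlinarith
      rw [Finset.sum_congr rfl (fun t _ => if_pos (hcond t))]
      simp_rw [Matrix.mulVec_mulVec]
      rw [sumMulVec, ← Finset.mul_sum, prodSum B d A K, ← hQ]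
    · rw [if_neg (by omega), if_pos heq, heq]
      have hcond : ∀ t : Fin K → Fin B,
          (((x₁:ℕ):ℝ)/B + (∑ i : Fin K, ((t i:ℕ):ℝ)/(B:ℝ)^((i:ℕ)+1))/B ≤ x)
          ↔ ((∑ i : Fin K, ((t i:ℕ):ℝ)/(B:ℝ)^((i:ℕ)+1)) ≤ (B:ℝ)*x - x₁) := by
        intro t
        rw [← add_div, div_le_iff₀ hBR]
        constructor <;> intro h <;> nlinarith
      have e1 : ∀ t : Fin K → Fin B,
          (if ((x₁:ℕ):ℝ)/B + (∑ i : Fin K, ((t i:ℕ):ℝ)/(B:ℝ)^((i:ℕ)+1))/B ≤ x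
            then A x₁ *ᵥ ((List.ofFn fun i => A ((t i : Fin B) : ℕ)).prod *ᵥ C) else 0)
          = (A x₁).mulVecLin (if (∑ i : Fin K, ((t i:ℕ):ℝ)/(B:ℝ)^((i:ℕ)+1)) ≤ (B:ℝ)*x - x₁
            then (List.ofFn fun i => A ((t i : Fin B) : ℕ)).prod *ᵥ C else 0) := by
        intro t
        rw [if_congr (hcond t) rfl rfl, apply_ite ((A x₁).mulVecLin)]
        simp [Matrix.mulVecLin_apply]
      rw [Finset.sum_congr rfl (fun t _ => e1 t), ← map_sum, Matrix.mulVecLin_apply]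
      congr 1
      rw [hSig, Finset.sum_filter]
    · rw [if_neg (by omega), if_neg (by omega)]
      have hcond : ∀ t : Fin K → Fin B,
          ¬ (((b:ℕ):ℝ)/B + (∑ i : Fin K, ((t i:ℕ):ℝ)/(B:ℝ)^((i:ℕ)+1))/B ≤ x) := by
        intro t
        have hb1 : (x₁:ℝ) + 1 ≤ ((b:ℕ):ℝ) := by exact_mod_cast hgt
        have h2 := Snn t
        rw [← add_div, div_le_iff₀ hBR]
        push_neg
        nlinarith
      rw [Finset.sum_congr rfl (fun t _ => if_neg (hcond t)), Finset.sum_const, smul_zero]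
  rw [Finset.sum_congr rfl (fun b _ => inner b)]
  rw [Fin.sum_univ_eq_sum_range (fun b => if b < x₁ then (A b * Q^K) *ᵥ C
        else if b = x₁ then A x₁ *ᵥ Sig K ((B:ℝ)*x - x₁) else 0)]
  rw [Finset.range_eq_Ico, ← Finset.sum_Ico_consecutive _ (Nat.zero_le x₁) hx₁B.le]
  congr 1
  · rw [← Finset.range_eq_Ico]
    exact Finset.sum_congr rfl (fun b hb => if_pos (Finset.mem_range.mp hb))
  · rw [Finset.sum_eq_single_of_mem x₁ (by simp [hx₁B])]
    · simp
    · intro b hb hne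
      rw [if_neg, if_neg hne]
      simp only [Finset.mem_Ico] at hb
      omega
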